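/- Let f:[a,b]→ℝ be convex. Then (b−a)/3 · [f((5a+b)/6) + f((a+b)/2) + f((a+5b)/6)] ≤ ∫_a^b f(t) dt ≤ (b−a)/6 · [f(a) + 2f((2a+b)/3) + 2f((a+2b)/3) + f(b)]. -/

import Mathlib

open MeasureTheory Set intervalIntegral

section aux

variable {a b : ℝ} {f : ℝ → ℝ}

/-- A convex function on `Icc a b` is bounded in absolute value. -/
lemma convexOn_abs_bound (hab : a ≤ b) (hf : ConvexOn ℝ (Set.Icc a b) f) :
    ∃ C : ℝ, ∀ x ∈ Icc a b, |f x| ≤ C := by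
  have ha : a ∈ Icc a b := left_mem_Icc.mpr hab
  have hb : b ∈ Icc a b := right_mem_Icc.mpr hab
  set M := max (f a) (f b) with hM
  have hup : ∀ x ∈ Icc a b, f x ≤ M := by
    intro x hx
    exact hf.le_on_segment ha hb (by rwa [segment_eq_Icc hab])
  have hlow : ∀ x ∈ Icc a b, 2 * f ((a + b) / 2) - M ≤ f x := by
    intro x hx
    have hx' : a + b - x ∈ Icc a b := ⟨by linarith [hx.2], by linarith [hx.1]⟩
    have h2 := hf.2 hx hx' (by norm_num : (0:ℝ) ≤ 1/2) (by norm_num : (0:ℝ) ≤ 1/2)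
      (by norm_num)
    have hpt : (1/2 : ℝ) • x + (1/2 : ℝ) • (a + b - x) = (a + b) / 2 := by
      simp [smul_eq_mul]; ring
    rw [hpt] at h2
    have := hup _ hx'
    simp only [smul_eq_mul] at h2
    linarith
  refine ⟨|M| + |2 * f ((a + b) / 2) - M|, fun x hx => ?_⟩
  have h1 := hup x hx
  have h2 := hlow x hx
  have := le_abs_self M
  have := neg_abs_le (2 * f ((a + b) / 2) - M)
  rw [abs_le]
  constructor <;> nlinarith [abs_nonneg M, abs_nonneg (2 * f ((a + b) / 2) - M)]

lemma convexOn_integrableOn (hab : a ≤ b) (hf : ConvexOn ℝ (Set.Icc a b) f) :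
    IntegrableOn f (Icc a b) volume := by
  obtain ⟨C, hC⟩ := convexOn_abs_bound hab hf
  rw [integrableOn_Icc_iff_integrableOn_Ioo]
  have hcont : ContinuousOn f (Ioo a b) := by
    have := hf.continuousOn_interior
    rwa [interior_Icc] at this
  refine ⟨hcont.aestronglyMeasurable measurableSet_Ioo, ?_⟩
  apply MeasureTheory.HasFiniteIntegral.restrict_of_bounded (C := C)
    (measure_Ioo_lt_top)
  refine (ae_restrict_iff' measurableSet_Ioo).mpr (ae_of_all _ fun x hx => ?_)
  exact hC x (Ioo_subset_Icc_self hx)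

lemma convexOn_intervalIntegrable (hab : a ≤ b) (hf : ConvexOn ℝ (Set.Icc a b) f)
    {c d : ℝ} (hac : a ≤ c) (hcd : c ≤ d) (hdb : d ≤ b) :
    IntervalIntegrable f volume c d := by
  rw [intervalIntegrable_iff]
  exact (convexOn_integrableOn hab hf).mono_set
    (Set.uIoc_subset_uIcc.trans (uIcc_subset_Icc ⟨hac, hcd.trans hdb⟩ ⟨hac.trans hcd, hdb⟩))

/-- Hermite–Hadamard on a subinterval. -/
lemma hh_sub (hab : a ≤ b) (hf : ConvexOn ℝ (Set.Icc a b) f)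
    {c d : ℝ} (hac : a ≤ c) (hcd : c < d) (hdb : d ≤ b) :
    (d - c) * f ((c + d) / 2) ≤ (∫ t in c..d, f t) ∧
      (∫ t in c..d, f t) ≤ (d - c) * (f c + f d) / 2 := by
  have hdc : d - c ≠ 0 := by linarith
  have hi : IntervalIntegrable f volume c d :=
    convexOn_intervalIntegrable hab hf hac hcd.le hdb
  have hcmem : c ∈ Icc a b := ⟨hac, hcd.le.trans hdb⟩
  have hdmem : d ∈ Icc a b := ⟨hac.trans hcd.le, hdb⟩
  have hrefl_int : IntervalIntegrable (fun t => f (c + d - t)) volume c d := by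
    have h := hi.comp_sub_left (c + d)
    have e1 : c + d - c = d := by ring
    have e2 : c + d - d = c := by ring
    rw [e1, e2] at h
    exact h.symm
  have hrefl_eq : (∫ t in c..d, f (c + d - t)) = ∫ t in c..d, f t := by
    have h := integral_comp_sub_left (a := c) (b := d) f (c + d)
    have e1 : c + d - c = d := by ring
    have e2 : c + d - d = c := by ring
    rw [e1, e2] at h
    exact h
  constructor
  · have key : ∀ t ∈ Icc c d, f ((c + d) / 2) ≤ (f t + f (c + d - t)) / 2 := by
      intro t ht
      have htm : t ∈ Icc a b := ⟨hac.trans ht.1, ht.2.trans hdb⟩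
      have htm' : c + d - t ∈ Icc a b :=
        ⟨hac.trans (by linarith [ht.2]), (by linarith [ht.1] : c + d - t ≤ d).trans hdb⟩
      have h2 := hf.2 htm htm' (by norm_num : (0:ℝ) ≤ 1/2) (by norm_num : (0:ℝ) ≤ 1/2)
        (by norm_num)
      simp only [smul_eq_mul] at h2
      have hpt : 1 / 2 * t + 1 / 2 * (c + d - t) = (c + d) / 2 := by ring
      rw [hpt] at h2
      linarith
    calc (d - c) * f ((c + d) / 2) = ∫ _t in c..d, f ((c + d) / 2) := by
          rw [intervalIntegral.integral_const]; simp [smul_eq_mul]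
      _ ≤ ∫ t in c..d, (f t + f (c + d - t)) / 2 :=
          integral_mono_on hcd.le intervalIntegrable_const
            ((hi.add hrefl_int).div_const 2) key
      _ = ((∫ t in c..d, f t) + ∫ t in c..d, f (c + d - t)) / 2 := by
          rw [intervalIntegral.integral_div, integral_add hi hrefl_int]
      _ = ∫ t in c..d, f t := by rw [hrefl_eq]; ring
  · have chord : ∀ t ∈ Icc c d,
        f t ≤ (d * f c - c * f d) / (d - c) + (f d - f c) / (d - c) * t := by
      intro t ht
      have hμ : (0:ℝ) ≤ (d - t) / (d - c) := by
        apply div_nonneg <;> linarith [ht.2]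
      have hν : (0:ℝ) ≤ (t - c) / (d - c) := by
        apply div_nonneg <;> linarith [ht.1]
      have hsum : (d - t) / (d - c) + (t - c) / (d - c) = 1 := by
        field_simp; ring
      have h2 := hf.2 hcmem hdmem hμ hν hsum
      simp only [smul_eq_mul] at h2
      have hpt : (d - t) / (d - c) * c + (t - c) / (d - c) * d = t := by
        field_simp; ring
      rw [hpt] at h2
      have hrhs : (d - t) / (d - c) * f c + (t - c) / (d - c) * f d
          = (d * f c - c * f d) / (d - c) + (f d - f c) / (d - c) * t := by
        field_simp; ring
      linarith [hrhs ▸ h2]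
    calc (∫ t in c..d, f t)
        ≤ ∫ t in c..d, ((d * f c - c * f d) / (d - c) + (f d - f c) / (d - c) * t) :=
          integral_mono_on hcd.le hi
            ((continuous_const.add (continuous_const.mul continuous_id)).intervalIntegrable c d)
            chord
      _ = (d - c) * (f c + f d) / 2 := by
          rw [integral_add intervalIntegrable_const
              ((intervalIntegral.intervalIntegrable_id).const_mul _),
            intervalIntegral.integral_const, intervalIntegral.integral_const_mul, integral_id]
          simp only [smul_eq_mul]
          field_simp
          ring

end aux

theorem hermite_hadamard_n3
    (a b : ℝ) (hab : a < b) (f : ℝ → ℝ)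
    (hf : ConvexOn ℝ (Set.Icc a b) f) :
    (b - a) / 3 * (f ((5 * a + b) / 6) + f ((a + b) / 2) + f ((a + 5 * b) / 6)) ≤
      (∫ t in a..b, f t) ∧
    (∫ t in a..b, f t) ≤
      (b - a) / 6 * (f a + 2 * f ((2 * a + b) / 3) + 2 * f ((a + 2 * b) / 3) + f b) := by
  have hab' : a ≤ b := hab.le
  set c₁ := (2 * a + b) / 3 with hc₁
  set c₂ := (a + 2 * b) / 3 with hc₂
  have h1 : a < c₁ := by rw [hc₁]; linarith
  have h2 : c₁ < c₂ := by rw [hc₁, hc₂]; linarith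
  have h3 : c₂ < b := by rw [hc₂]; linarith
  have hsplit : (∫ t in a..c₁, f t) + (∫ t in c₁..c₂, f t) + (∫ t in c₂..b, f t)
      = ∫ t in a..b, f t := by
    rw [integral_add_adjacent_intervals
        (convexOn_intervalIntegrable hab' hf le_rfl h1.le (by linarith))
        (convexOn_intervalIntegrable hab' hf h1.le h2.le h3.le),
      integral_add_adjacent_intervals
        (convexOn_intervalIntegrable hab' hf le_rfl (by linarith) h3.le)
        (convexOn_intervalIntegrable hab' hf (by linarith) h3.le le_rfl)]
  obtain ⟨l1, u1⟩ := hh_sub hab' hf le_rfl h1 (by linarith)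
  obtain ⟨l2, u2⟩ := hh_sub hab' hf h1.le h2 h3.le
  obtain ⟨l3, u3⟩ := hh_sub hab' hf (by linarith : a ≤ c₂) h3 le_rfl
  have e1 : (a + c₁) / 2 = (5 * a + b) / 6 := by rw [hc₁]; ring
  have e2 : (c₁ + c₂) / 2 = (a + b) / 2 := by rw [hc₁, hc₂]; ring
  have e3 : (c₂ + b) / 2 = (a + 5 * b) / 6 := by rw [hc₂]; ring
  have d1 : c₁ - a = (b - a) / 3 := by rw [hc₁]; ring
  have d2 : c₂ - c₁ = (b - a) / 3 := by rw [hc₁, hc₂]; ring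
  have d3 : b - c₂ = (b - a) / 3 := by rw [hc₂]; ring
  rw [e1] at l1
  rw [d1] at l1 u1
  rw [e2] at l2
  rw [d2] at l2 u2
  rw [e3] at l3
  rw [d3] at l3 u3
  constructor
  · nlinarith [l1, l2, l3, hsplit]
  · nlinarith [u1, u2, u3, hsplit]
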